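/- (Exact von Mises remainder identity.) In the capture-recapture setup, assume MAR and positivity. Let q̄_y(v,x) > 0, q̄_y(v) > 0, π̄(y,v) > 0 be arbitrary candidate nuisance functions defined on the support, and set 1/γ̄(v,x) = 1 + Π_{y ≠ 0} q̄_y(v,x)^{(−1)^{|y|+1}}, 1/γ(v,x) = 1 + Π_{y ≠ 0} q_y(v,x)^{(−1)^{|y|+1}}, and m̄(v) = E_Q[ 1/γ̄(V,X) − 1 | V=v ]. Define, for an observation z = (y,v,x,r) with y ≠ 0, φ̃(z) = Σ_{y' ≠ 0} (−1)^{1+|y'|} { (r·1(y=y') / π̄(y',v)) · [ (1/q̄_{y'}(v,x))(1/γ̄(v,x) − 1) − (1/q̄_{y'}(v)) m̄(v) ] + (1(y=y')/q̄_{y'}(v)) m̄(v) }. Then E_Q[ φ̃(Y,V,X,R) ] − E_Q[ 1/γ(V,X) − 1 ] = E_Q[ (1/γ̄(V,X) − 1) Σ_{y ≠ 0} (−1)^{1+|y|} ((π(y,V) − π̄(y,V))/π̄(y,V)) ( (q_y(V,X) − q̄_y(V,X))/q̄_y(V,X) − (q_y(V) − q̄_y(V))/q̄_y(V) ) ] +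 E_Q[ (1/γ̄(V,X) − 1) Σ_{y ≠ 0} (−1)^{1+|y|} q_y(V,X)/q̄_y(V,X) − (1/γ(V,X) − 1) ]. -/

import Mathlib

open scoped Classical
open Finset

/-- Probability `P(A)` of an event `A` under a probability weight `w` on a finite
outcome space `Ω`. -/
noncomputable def pr {Ω : Type*} [Fintype Ω] (w : Ω → ℝ) (A : Ω → Prop) : ℝ :=
  ∑ ω, if A ω then w ω else 0

/-- Conditional probability `P(A | B)` under the weight `w`. -/
noncomputable def cpr {Ω : Type*} [Fintype Ω] (w : Ω → ℝ) (A B : Ω → Prop) : ℝ :=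
  pr w (fun ω => A ω ∧ B ω) / pr w B

/-- Conditional expectation `E[f | B]` under the weight `w`. -/
noncomputable def cexp {Ω : Type*} [Fintype Ω] (w : Ω → ℝ) (f : Ω → ℝ) (B : Ω → Prop) : ℝ :=
  (∑ ω, if B ω then w ω * f ω else 0) / pr w B

/-- Full conditional q-probability `q_y(v,x) = Q(Y = y | V = v, X = x)`, where `Q` is the
law of the data conditional on capture (`Y ≠ 0`). -/
noncomputable def qfull {Ω 𝒱 𝒳 : Type*} [Fintype Ω] {K : ℕ}
    (w : Ω → ℝ) (Y : Ω → Finset (Fin K)) (V : Ω → 𝒱) (X : Ω → 𝒳)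
    (y : Finset (Fin K)) (v : 𝒱) (x : 𝒳) : ℝ :=
  cpr w (fun ω => Y ω = y) (fun ω => V ω = v ∧ X ω = x ∧ Y ω ≠ ∅)

/-- `V`-only conditional q-probability `q_y(v) = Q(Y = y | V = v)`. -/
noncomputable def qV {Ω 𝒱 : Type*} [Fintype Ω] {K : ℕ}
    (w : Ω → ℝ) (Y : Ω → Finset (Fin K)) (V : Ω → 𝒱)
    (y : Finset (Fin K)) (v : 𝒱) : ℝ :=
  cpr w (fun ω => Y ω = y) (fun ω => V ω = v ∧ Y ω ≠ ∅)

/-- Covariate distribution among the fully observed,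
`λ_x(y,v) = Q(X = x | Y = y, V = v, R = 1)`. -/
noncomputable def lam {Ω 𝒱 𝒳 : Type*} [Fintype Ω] {K : ℕ}
    (w : Ω → ℝ) (Y : Ω → Finset (Fin K)) (V : Ω → 𝒱) (X : Ω → 𝒳) (R : Ω → Bool)
    (x : 𝒳) (y : Finset (Fin K)) (v : 𝒱) : ℝ :=
  cpr w (fun ω => X ω = x) (fun ω => Y ω = y ∧ V ω = v ∧ R ω = true ∧ Y ω ≠ ∅)

/-- Missingness propensity score `π(y,v) = Q(R = 1 | Y = y, V = v)`. -/
noncomputable def piR {Ω 𝒱 : Type*} [Fintype Ω] {K : ℕ}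
    (w : Ω → ℝ) (Y : Ω → Finset (Fin K)) (V : Ω → 𝒱) (R : Ω → Bool)
    (y : Finset (Fin K)) (v : 𝒱) : ℝ :=
  cpr w (fun ω => R ω = true) (fun ω => Y ω = y ∧ V ω = v ∧ Y ω ≠ ∅)

section Helpers
variable {Ω : Type*} [Fintype Ω] {w : Ω → ℝ}

lemma pr_nonneg (hw0 : ∀ ω, 0 ≤ w ω) (A : Ω → Prop) : 0 ≤ pr w A :=
  Finset.sum_nonneg fun ω _ => by by_cases h : A ω <;> simp [pr, h, hw0 ω]

lemma pr_congr {A B : Ω → Prop} (h : ∀ ω, A ω ↔ B ω) : pr w A = pr w B :=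
  Finset.sum_congr rfl fun ω _ => by rw [iff_iff_eq.mp (h ω)]

lemma pr_mono (hw0 : ∀ ω, 0 ≤ w ω) {A B : Ω → Prop} (h : ∀ ω, A ω → B ω) :
    pr w A ≤ pr w B := by
  apply Finset.sum_le_sum
  intro ω _
  by_cases hA : A ω
  · simp [hA, h ω hA]
  · by_cases hB : B ω <;> simp [hA, hB, hw0 ω]

lemma pr_eq_zero_mono (hw0 : ∀ ω, 0 ≤ w ω) {A B : Ω → Prop} (h : ∀ ω, A ω → B ω)
    (hB : pr w B = 0) : pr w A = 0 :=
  le_antisymm (hB ▸ pr_mono hw0 h) (pr_nonneg hw0 A)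

lemma w_eq_zero_of_pr_zero (hw0 : ∀ ω, 0 ≤ w ω) {B : Ω → Prop} (h : pr w B = 0)
    {ω : Ω} (hB : B ω) : w ω = 0 := by
  have := (Finset.sum_eq_zero_iff_of_nonneg (fun ω _ => by
    by_cases hb : B ω <;> simp [hb, hw0 ω])).mp h ω (Finset.mem_univ ω)
  simpa [hB] using this

lemma single_le_pr (hw0 : ∀ ω, 0 ≤ w ω) {B : Ω → Prop} {ω : Ω} (hB : B ω) :
    w ω ≤ pr w B := by
  have : (if B ω then w ω else 0) ≤ pr w B :=
    Finset.single_le_sum (f := fun ω => if B ω then w ω else 0)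
      (fun ω _ => by by_cases h : B ω <;> simp [h, hw0 ω]) (Finset.mem_univ ω)
  simpa [hB] using this

lemma pr_pos_of (hw0 : ∀ ω, 0 ≤ w ω) {B : Ω → Prop} {ω : Ω} (hB : B ω) (hw : w ω ≠ 0) :
    0 < pr w B :=
  lt_of_lt_of_le (lt_of_le_of_ne (hw0 ω) (Ne.symm hw)) (single_le_pr hw0 hB)

lemma sum_eq_of_fiber {α : Type*} (g : Ω → α) (f h : Ω → ℝ)
    (H : ∀ a : α, ∑ ω, (if g ω = a then f ω else 0) = ∑ ω, (if g ω = a then h ω else 0)) :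
    ∑ ω, f ω = ∑ ω, h ω := by
  have key : ∀ f : Ω → ℝ, ∑ ω, f ω
      = ∑ a ∈ Finset.univ.image g, ∑ ω, (if g ω = a then f ω else 0) := by
    intro f
    rw [Finset.sum_comm]
    apply Finset.sum_congr rfl
    intro ω _
    rw [Finset.sum_ite_eq (Finset.univ.image g) (g ω) (fun _ => f ω)]
    simp
  rw [key f, key h]
  exact Finset.sum_congr rfl fun a _ => H a

end Helpers

section KLemmas
variable {Ω 𝒱 𝒳 : Type*} [Fintype Ω] {K : ℕ}
  (w : Ω → ℝ) (Y : Ω → Finset (Fin K)) (V : Ω → 𝒱) (X : Ω → 𝒳) (R : Ω → Bool)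

lemma qfull_mul (hw0 : ∀ ω, 0 ≤ w ω) (y : Finset (Fin K)) (v : 𝒱) (x : 𝒳) :
    qfull w Y V X y v x * pr w (fun ω => V ω = v ∧ X ω = x ∧ Y ω ≠ ∅)
      = pr w (fun ω => Y ω = y ∧ V ω = v ∧ X ω = x ∧ Y ω ≠ ∅) := by
  unfold qfull cpr
  by_cases hD : pr w (fun ω => V ω = v ∧ X ω = x ∧ Y ω ≠ ∅) = 0
  · rw [hD, mul_zero, pr_eq_zero_mono hw0 (fun ω h => ⟨h.2.1, h.2.2⟩) hD]
  · rw [div_mul_cancel₀ _ hD]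

lemma qV_mul (hw0 : ∀ ω, 0 ≤ w ω) (y : Finset (Fin K)) (v : 𝒱) :
    qV w Y V y v * pr w (fun ω => V ω = v ∧ Y ω ≠ ∅)
      = pr w (fun ω => Y ω = y ∧ V ω = v ∧ Y ω ≠ ∅) := by
  unfold qV cpr
  by_cases hD : pr w (fun ω => V ω = v ∧ Y ω ≠ ∅) = 0
  · rw [hD, mul_zero, pr_eq_zero_mono hw0 (fun ω h => ⟨h.2.1, h.2.2⟩) hD]
  · rw [div_mul_cancel₀ _ hD]

lemma mar_pr (hw0 : ∀ ω, 0 ≤ w ω)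
    (hMAR : ∀ (y : Finset (Fin K)) (v : 𝒱) (x : 𝒳) (r : Bool),
      0 < pr w (fun ω => Y ω = y ∧ V ω = v ∧ Y ω ≠ ∅) →
      cpr w (fun ω => X ω = x ∧ R ω = r) (fun ω => Y ω = y ∧ V ω = v ∧ Y ω ≠ ∅)
        = cpr w (fun ω => X ω = x) (fun ω => Y ω = y ∧ V ω = v ∧ Y ω ≠ ∅)
          * cpr w (fun ω => R ω = r) (fun ω => Y ω = y ∧ V ω = v ∧ Y ω ≠ ∅))
    (y : Finset (Fin K)) (v : 𝒱) (x : 𝒳) :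
    pr w (fun ω => Y ω = y ∧ V ω = v ∧ X ω = x ∧ R ω = true ∧ Y ω ≠ ∅)
      = piR w Y V R y v * pr w (fun ω => Y ω = y ∧ V ω = v ∧ X ω = x ∧ Y ω ≠ ∅) := by
  by_cases hB : pr w (fun ω => Y ω = y ∧ V ω = v ∧ Y ω ≠ ∅) = 0
  · rw [pr_eq_zero_mono hw0 (fun ω h => ⟨h.1, h.2.1, h.2.2.2.2⟩) hB,
      pr_eq_zero_mono hw0 (fun ω h => ⟨h.1, h.2.1, h.2.2.2⟩) hB, mul_zero]
  · have hpos : 0 < pr w (fun ω => Y ω = y ∧ V ω = v ∧ Y ω ≠ ∅) :=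
      lt_of_le_of_ne (pr_nonneg hw0 _) (Ne.symm hB)
    have h := hMAR y v x true hpos
    unfold cpr at h
    unfold piR cpr
    have e1 : pr w (fun ω => Y ω = y ∧ V ω = v ∧ X ω = x ∧ R ω = true ∧ Y ω ≠ ∅)
        = pr w (fun ω => (X ω = x ∧ R ω = true) ∧ (Y ω = y ∧ V ω = v ∧ Y ω ≠ ∅)) :=
      pr_congr fun ω => by tauto
    have e2 : pr w (fun ω => Y ω = y ∧ V ω = v ∧ X ω = x ∧ Y ω ≠ ∅)
        = pr w (fun ω => (X ω = x) ∧ (Y ω = y ∧ V ω = v ∧ Y ω ≠ ∅)) :=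
      pr_congr fun ω => by tauto
    rw [e1, e2, div_mul_eq_mul_div, eq_div_iff hB]
    rw [div_mul_div_comm, div_eq_div_iff hB (mul_ne_zero hB hB)] at h
    refine mul_right_cancel₀ hB ?_
    simp only [ne_eq] at h ⊢
    linear_combination h

lemma q_transfer (hw0 : ∀ ω, 0 ≤ w ω) {y : Finset (Fin K)} (hy : y ≠ ∅) (F : 𝒱 → 𝒳 → ℝ) :
    ∑ ω, (if Y ω = y then w ω * F (V ω) (X ω) else 0)
      = ∑ ω, (if Y ω ≠ ∅ then w ω * (qfull w Y V X y (V ω) (X ω) * F (V ω) (X ω)) else 0) := by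
  apply sum_eq_of_fiber (fun ω => (V ω, X ω))
  rintro ⟨v, x⟩
  have lsum : ∑ ω, (if (V ω, X ω) = (v, x) then (if Y ω = y then w ω * F (V ω) (X ω) else 0) else 0)
      = pr w (fun ω => Y ω = y ∧ V ω = v ∧ X ω = x ∧ Y ω ≠ ∅) * F v x := by
    rw [pr, Finset.sum_mul]
    refine Finset.sum_congr rfl fun ω _ => ?_
    by_cases hv : V ω = v <;> by_cases hx : X ω = x <;> by_cases hY : Y ω = y <;>
      simp [Prod.ext_iff, hv, hx, hY, hy]
  have rsum : ∑ ω, (if (V ω, X ω) = (v, x)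
        then (if Y ω ≠ ∅ then w ω * (qfull w Y V X y (V ω) (X ω) * F (V ω) (X ω)) else 0) else 0)
      = pr w (fun ω => V ω = v ∧ X ω = x ∧ Y ω ≠ ∅) * (qfull w Y V X y v x * F v x) := by
    rw [pr, Finset.sum_mul]
    refine Finset.sum_congr rfl fun ω _ => ?_
    by_cases hv : V ω = v <;> by_cases hx : X ω = x <;> by_cases hY : Y ω = ∅ <;>
      simp [Prod.ext_iff, hv, hx, hY]
  have key : pr w (fun ω => Y ω = y ∧ V ω = v ∧ X ω = x ∧ Y ω ≠ ∅) * F v x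
      = pr w (fun ω => V ω = v ∧ X ω = x ∧ Y ω ≠ ∅) * (qfull w Y V X y v x * F v x) := by
    rw [← qfull_mul w Y V X hw0 y v x]; ring
  convert lsum.trans (key.trans rsum.symm) using 2 with ω <;> congr 1

lemma qV_transfer (hw0 : ∀ ω, 0 ≤ w ω) {y : Finset (Fin K)} (hy : y ≠ ∅) (G : 𝒱 → ℝ) :
    ∑ ω, (if Y ω = y then w ω * G (V ω) else 0)
      = ∑ ω, (if Y ω ≠ ∅ then w ω * (qV w Y V y (V ω) * G (V ω)) else 0) := by
  apply sum_eq_of_fiber (fun ω => V ω)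
  intro v
  have lsum : ∑ ω, (if V ω = v then (if Y ω = y then w ω * G (V ω) else 0) else 0)
      = pr w (fun ω => Y ω = y ∧ V ω = v ∧ Y ω ≠ ∅) * G v := by
    rw [pr, Finset.sum_mul]
    refine Finset.sum_congr rfl fun ω _ => ?_
    by_cases hv : V ω = v <;> by_cases hY : Y ω = y <;> simp [hv, hY, hy]
  have rsum : ∑ ω, (if V ω = v then (if Y ω ≠ ∅ then w ω * (qV w Y V y (V ω) * G (V ω)) else 0) else 0)
      = pr w (fun ω => V ω = v ∧ Y ω ≠ ∅) * (qV w Y V y v * G v) := by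
    rw [pr, Finset.sum_mul]
    refine Finset.sum_congr rfl fun ω _ => ?_
    by_cases hv : V ω = v <;> by_cases hY : Y ω = ∅ <;> simp [hv, hY]
  rw [lsum, rsum, ← qV_mul w Y V hw0 y v]; ring

lemma mar_transfer (hw0 : ∀ ω, 0 ≤ w ω)
    (hMAR : ∀ (y : Finset (Fin K)) (v : 𝒱) (x : 𝒳) (r : Bool),
      0 < pr w (fun ω => Y ω = y ∧ V ω = v ∧ Y ω ≠ ∅) →
      cpr w (fun ω => X ω = x ∧ R ω = r) (fun ω => Y ω = y ∧ V ω = v ∧ Y ω ≠ ∅)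
        = cpr w (fun ω => X ω = x) (fun ω => Y ω = y ∧ V ω = v ∧ Y ω ≠ ∅)
          * cpr w (fun ω => R ω = r) (fun ω => Y ω = y ∧ V ω = v ∧ Y ω ≠ ∅))
    {y : Finset (Fin K)} (hy : y ≠ ∅) (F : 𝒱 → 𝒳 → ℝ) :
    ∑ ω, (if Y ω = y ∧ R ω = true then w ω * F (V ω) (X ω) else 0)
      = ∑ ω, (if Y ω = y then w ω * (piR w Y V R y (V ω) * F (V ω) (X ω)) else 0) := by
  apply sum_eq_of_fiber (fun ω => (V ω, X ω))
  rintro ⟨v, x⟩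
  have lsum : ∑ ω, (if (V ω, X ω) = (v, x)
        then (if Y ω = y ∧ R ω = true then w ω * F (V ω) (X ω) else 0) else 0)
      = pr w (fun ω => Y ω = y ∧ V ω = v ∧ X ω = x ∧ R ω = true ∧ Y ω ≠ ∅) * F v x := by
    rw [pr, Finset.sum_mul]
    refine Finset.sum_congr rfl fun ω _ => ?_
    by_cases hv : V ω = v <;> by_cases hx : X ω = x <;> by_cases hY : Y ω = y <;>
      by_cases hR : R ω = true <;> simp [Prod.ext_iff, hv, hx, hY, hR, hy]
  have rsum : ∑ ω, (if (V ω, X ω) = (v, x)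
        then (if Y ω = y then w ω * (piR w Y V R y (V ω) * F (V ω) (X ω)) else 0) else 0)
      = pr w (fun ω => Y ω = y ∧ V ω = v ∧ X ω = x ∧ Y ω ≠ ∅) * (piR w Y V R y v * F v x) := by
    rw [pr, Finset.sum_mul]
    refine Finset.sum_congr rfl fun ω _ => ?_
    by_cases hv : V ω = v <;> by_cases hx : X ω = x <;> by_cases hY : Y ω = y <;>
      simp [Prod.ext_iff, hv, hx, hY, hy]
  have key : pr w (fun ω => Y ω = y ∧ V ω = v ∧ X ω = x ∧ R ω = true ∧ Y ω ≠ ∅) * F v x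
      = pr w (fun ω => Y ω = y ∧ V ω = v ∧ X ω = x ∧ Y ω ≠ ∅) * (piR w Y V R y v * F v x) := by
    rw [mar_pr w Y V X R hw0 hMAR y v x]; ring
  convert lsum.trans (key.trans rsum.symm) using 2 with ω <;> congr 1

end KLemmas

section MB
variable {Ω 𝒱 𝒳 : Type*} [Fintype Ω]
  (w : Ω → ℝ) {K : ℕ} (Y : Ω → Finset (Fin K)) (V : Ω → 𝒱) (X : Ω → 𝒳)

lemma mb_fiber (hw0 : ∀ ω, 0 ≤ w ω) (gib : 𝒱 → 𝒳 → ℝ) (mb : 𝒱 → ℝ)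
    (hmb : ∀ v : 𝒱, mb v
      = cexp w (fun ω => gib (V ω) (X ω) - 1) (fun ω => V ω = v ∧ Y ω ≠ ∅)) (v : 𝒱) :
    ∑ ω, (if V ω = v ∧ Y ω ≠ ∅ then w ω * (gib (V ω) (X ω) - 1) else 0)
      = mb v * pr w (fun ω => V ω = v ∧ Y ω ≠ ∅) := by
  rw [hmb v]
  unfold cexp
  by_cases hD : pr w (fun ω => V ω = v ∧ Y ω ≠ ∅) = 0
  · rw [hD, mul_zero]
    refine Finset.sum_eq_zero fun ω _ => ?_
    by_cases hB : V ω = v ∧ Y ω ≠ ∅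
    · simp [hB, w_eq_zero_of_pr_zero hw0 hD hB]
    · simp [hB]
  · rw [div_mul_cancel₀ _ hD]
    refine Finset.sum_congr rfl fun ω _ => ?_
    by_cases hB : V ω = v ∧ Y ω ≠ ∅ <;> simp [hB]

lemma mb_tower (hw0 : ∀ ω, 0 ≤ w ω) (gib : 𝒱 → 𝒳 → ℝ) (mb : 𝒱 → ℝ)
    (hmb : ∀ v : 𝒱, mb v
      = cexp w (fun ω => gib (V ω) (X ω) - 1) (fun ω => V ω = v ∧ Y ω ≠ ∅)) (G : 𝒱 → ℝ) :
    ∑ ω, (if Y ω ≠ ∅ then w ω * ((gib (V ω) (X ω) - 1) * G (V ω)) else 0)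
      = ∑ ω, (if Y ω ≠ ∅ then w ω * (mb (V ω) * G (V ω)) else 0) := by
  apply sum_eq_of_fiber (fun ω => V ω)
  intro v
  have lsum : ∑ ω, (if V ω = v then (if Y ω ≠ ∅ then w ω * ((gib (V ω) (X ω) - 1) * G (V ω)) else 0) else 0)
      = (∑ ω, (if V ω = v ∧ Y ω ≠ ∅ then w ω * (gib (V ω) (X ω) - 1) else 0)) * G v := by
    rw [Finset.sum_mul]
    refine Finset.sum_congr rfl fun ω _ => ?_
    by_cases hv : V ω = v <;> by_cases hY : Y ω = ∅ <;> simp [hv, hY] <;> ring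
  have rsum : ∑ ω, (if V ω = v then (if Y ω ≠ ∅ then w ω * (mb (V ω) * G (V ω)) else 0) else 0)
      = pr w (fun ω => V ω = v ∧ Y ω ≠ ∅) * (mb v * G v) := by
    rw [pr, Finset.sum_mul]
    refine Finset.sum_congr rfl fun ω _ => ?_
    by_cases hv : V ω = v <;> by_cases hY : Y ω = ∅ <;> simp [hv, hY] <;> ring
  have key : (∑ ω, (if V ω = v ∧ Y ω ≠ ∅ then w ω * (gib (V ω) (X ω) - 1) else 0)) * G v
      = pr w (fun ω => V ω = v ∧ Y ω ≠ ∅) * (mb v * G v) := by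
    rw [mb_fiber w Y V X hw0 gib mb hmb v]; ring
  convert lsum.trans (key.trans rsum.symm) using 2 with ω <;> congr 1

lemma swap_sum {β : Type*} (s : Finset β) (P : Ω → Prop) (f : β → Ω → ℝ) :
    ∑ ω, (if P ω then w ω * (∑ y ∈ s, f y ω) else 0)
      = ∑ y ∈ s, ∑ ω, (if P ω then w ω * f y ω else 0) := by
  rw [Finset.sum_comm]
  refine Finset.sum_congr rfl fun ω _ => ?_
  by_cases h : P ω
  · simp [h, Finset.mul_sum]
  · simp [h]

lemma swap_sum' {K : ℕ} (Y : Ω → Finset (Fin K)) {β : Type*} (s : Finset β) (f : β → Ω → ℝ) :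
    ∑ ω, (if Y ω ≠ ∅ then w ω * (∑ y ∈ s, f y ω) else 0)
      = ∑ y ∈ s, ∑ ω, (if Y ω ≠ ∅ then w ω * f y ω else 0) := by
  rw [Finset.sum_comm]
  refine Finset.sum_congr rfl fun ω _ => ?_
  by_cases h : Y ω ≠ ∅
  · simp [h, Finset.mul_sum]
  · simp [h]

end MB

lemma main_core {Ω 𝒱 𝒳 : Type*} [Fintype Ω] {K : ℕ}
    (w : Ω → ℝ) (Y : Ω → Finset (Fin K)) (V : Ω → 𝒱) (X : Ω → 𝒳) (R : Ω → Bool)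
    (hw0 : ∀ ω, 0 ≤ w ω)
    (hMAR : ∀ (y : Finset (Fin K)) (v : 𝒱) (x : 𝒳) (r : Bool),
      0 < pr w (fun ω => Y ω = y ∧ V ω = v ∧ Y ω ≠ ∅) →
      cpr w (fun ω => X ω = x ∧ R ω = r) (fun ω => Y ω = y ∧ V ω = v ∧ Y ω ≠ ∅)
        = cpr w (fun ω => X ω = x) (fun ω => Y ω = y ∧ V ω = v ∧ Y ω ≠ ∅)
          * cpr w (fun ω => R ω = r) (fun ω => Y ω = y ∧ V ω = v ∧ Y ω ≠ ∅))
    (qb : Finset (Fin K) → 𝒱 → 𝒳 → ℝ) (qVb : Finset (Fin K) → 𝒱 → ℝ)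
    (pib : Finset (Fin K) → 𝒱 → ℝ)
    (hbpos : ∀ y : Finset (Fin K), y ≠ ∅ → ∀ (v : 𝒱) (x : 𝒳),
      0 < pr w (fun ω => V ω = v ∧ X ω = x ∧ Y ω ≠ ∅) →
      0 < qb y v x ∧ 0 < qVb y v ∧ 0 < pib y v)
    (gib gi : 𝒱 → 𝒳 → ℝ) (mb : 𝒱 → ℝ)
    (hmb : ∀ v : 𝒱, mb v
      = cexp w (fun ω => gib (V ω) (X ω) - 1) (fun ω => V ω = v ∧ Y ω ≠ ∅))
    (φt : Finset (Fin K) → 𝒱 → 𝒳 → Bool → ℝ)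
    (hφt : ∀ (y : Finset (Fin K)) (v : 𝒱) (x : 𝒳) (r : Bool), φt y v x r
      = ∑ y' ∈ Finset.univ.filter (fun y' : Finset (Fin K) => y' ≠ ∅),
          (-1 : ℝ) ^ (1 + y'.card) *
            (((if r = true then (1 : ℝ) else 0) * (if y = y' then (1 : ℝ) else 0))
                / pib y' v *
              ((1 / qb y' v x) * (gib v x - 1) - (1 / qVb y' v) * mb v)
            + (if y = y' then (1 : ℝ) else 0) / qVb y' v * mb v)) :
    (∑ ω, if Y ω ≠ ∅ then w ω * φt (Y ω) (V ω) (X ω) (R ω) else 0)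
      - (∑ ω, if Y ω ≠ ∅ then w ω * (gi (V ω) (X ω) - 1) else 0)
    = (∑ ω, if Y ω ≠ ∅ then w ω * ((gib (V ω) (X ω) - 1) *
          ∑ y ∈ Finset.univ.filter (fun y : Finset (Fin K) => y ≠ ∅),
            (-1 : ℝ) ^ (1 + y.card) *
              ((piR w Y V R y (V ω) - pib y (V ω)) / pib y (V ω)) *
              ((qfull w Y V X y (V ω) (X ω) - qb y (V ω) (X ω)) / qb y (V ω) (X ω)
                - (qV w Y V y (V ω) - qVb y (V ω)) / qVb y (V ω))) else 0)
      + (∑ ω, if Y ω ≠ ∅ then w ω * ((gib (V ω) (X ω) - 1) *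
            (∑ y ∈ Finset.univ.filter (fun y : Finset (Fin K) => y ≠ ∅),
              (-1 : ℝ) ^ (1 + y.card) *
                (qfull w Y V X y (V ω) (X ω) / qb y (V ω) (X ω)))
          - (gi (V ω) (X ω) - 1)) else 0) := by
  classical
  -- split off the gi part of the last sum
  have hN4 : (∑ ω, if Y ω ≠ ∅ then w ω * ((gib (V ω) (X ω) - 1) *
            (∑ y ∈ Finset.univ.filter (fun y : Finset (Fin K) => y ≠ ∅),
              (-1 : ℝ) ^ (1 + y.card) *
                (qfull w Y V X y (V ω) (X ω) / qb y (V ω) (X ω)))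
          - (gi (V ω) (X ω) - 1)) else 0)
      = (∑ ω, if Y ω ≠ ∅ then w ω * ((gib (V ω) (X ω) - 1) *
            (∑ y ∈ Finset.univ.filter (fun y : Finset (Fin K) => y ≠ ∅),
              (-1 : ℝ) ^ (1 + y.card) *
                (qfull w Y V X y (V ω) (X ω) / qb y (V ω) (X ω)))) else 0)
        - (∑ ω, if Y ω ≠ ∅ then w ω * (gi (V ω) (X ω) - 1) else 0) := by
    rw [← Finset.sum_sub_distrib]
    refine Finset.sum_congr rfl fun ω _ => ?_
    by_cases h : Y ω ≠ ∅ <;> simp [h] <;> ring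
  rw [hN4]
  have main : (∑ ω, if Y ω ≠ ∅ then w ω * φt (Y ω) (V ω) (X ω) (R ω) else 0)
      = (∑ ω, if Y ω ≠ ∅ then w ω * ((gib (V ω) (X ω) - 1) *
            ∑ y ∈ Finset.univ.filter (fun y : Finset (Fin K) => y ≠ ∅),
              (-1 : ℝ) ^ (1 + y.card) *
                ((piR w Y V R y (V ω) - pib y (V ω)) / pib y (V ω)) *
                ((qfull w Y V X y (V ω) (X ω) - qb y (V ω) (X ω)) / qb y (V ω) (X ω)
                  - (qV w Y V y (V ω) - qVb y (V ω)) / qVb y (V ω))) else 0)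
        + (∑ ω, if Y ω ≠ ∅ then w ω * ((gib (V ω) (X ω) - 1) *
            (∑ y ∈ Finset.univ.filter (fun y : Finset (Fin K) => y ≠ ∅),
              (-1 : ℝ) ^ (1 + y.card) *
                (qfull w Y V X y (V ω) (X ω) / qb y (V ω) (X ω)))) else 0) := by
    -- expand φt pointwise and swap the sums
    have hA : (∑ ω, if Y ω ≠ ∅ then w ω * φt (Y ω) (V ω) (X ω) (R ω) else 0)
        = ∑ y ∈ Finset.univ.filter (fun y : Finset (Fin K) => y ≠ ∅),
            ∑ ω, (if Y ω ≠ ∅ then w ω *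
              ((-1 : ℝ) ^ (1 + y.card) *
                (((if R ω = true then (1 : ℝ) else 0) * (if Y ω = y then (1 : ℝ) else 0))
                    / pib y (V ω) *
                  ((1 / qb y (V ω) (X ω)) * (gib (V ω) (X ω) - 1)
                    - (1 / qVb y (V ω)) * mb (V ω))
                + (if Y ω = y then (1 : ℝ) else 0) / qVb y (V ω) * mb (V ω))) else 0) := by
      rw [Finset.sum_congr rfl fun ω _ =>
        (by rw [hφt] : (if Y ω ≠ ∅ then w ω * φt (Y ω) (V ω) (X ω) (R ω) else 0) = _)]
      exact swap_sum' w Y _ _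
    have hC : (∑ ω, if Y ω ≠ ∅ then w ω * ((gib (V ω) (X ω) - 1) *
            ∑ y ∈ Finset.univ.filter (fun y : Finset (Fin K) => y ≠ ∅),
              (-1 : ℝ) ^ (1 + y.card) *
                ((piR w Y V R y (V ω) - pib y (V ω)) / pib y (V ω)) *
                ((qfull w Y V X y (V ω) (X ω) - qb y (V ω) (X ω)) / qb y (V ω) (X ω)
                  - (qV w Y V y (V ω) - qVb y (V ω)) / qVb y (V ω))) else 0)
        = ∑ y ∈ Finset.univ.filter (fun y : Finset (Fin K) => y ≠ ∅),
            ∑ ω, (if Y ω ≠ ∅ then w ω * ((gib (V ω) (X ω) - 1) *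
              ((-1 : ℝ) ^ (1 + y.card) *
                ((piR w Y V R y (V ω) - pib y (V ω)) / pib y (V ω)) *
                ((qfull w Y V X y (V ω) (X ω) - qb y (V ω) (X ω)) / qb y (V ω) (X ω)
                  - (qV w Y V y (V ω) - qVb y (V ω)) / qVb y (V ω)))) else 0) := by
      rw [Finset.sum_congr rfl fun ω _ =>
        (by rw [Finset.mul_sum] :
          (if Y ω ≠ ∅ then w ω * ((gib (V ω) (X ω) - 1) *
            ∑ y ∈ Finset.univ.filter (fun y : Finset (Fin K) => y ≠ ∅),
              (-1 : ℝ) ^ (1 + y.card) *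
                ((piR w Y V R y (V ω) - pib y (V ω)) / pib y (V ω)) *
                ((qfull w Y V X y (V ω) (X ω) - qb y (V ω) (X ω)) / qb y (V ω) (X ω)
                  - (qV w Y V y (V ω) - qVb y (V ω)) / qVb y (V ω))) else 0) = _)]
      exact swap_sum' w Y _ _
    have hD2 : (∑ ω, if Y ω ≠ ∅ then w ω * ((gib (V ω) (X ω) - 1) *
            (∑ y ∈ Finset.univ.filter (fun y : Finset (Fin K) => y ≠ ∅),
              (-1 : ℝ) ^ (1 + y.card) *
                (qfull w Y V X y (V ω) (X ω) / qb y (V ω) (X ω)))) else 0)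
        = ∑ y ∈ Finset.univ.filter (fun y : Finset (Fin K) => y ≠ ∅),
            ∑ ω, (if Y ω ≠ ∅ then w ω * ((gib (V ω) (X ω) - 1) *
              ((-1 : ℝ) ^ (1 + y.card) *
                (qfull w Y V X y (V ω) (X ω) / qb y (V ω) (X ω)))) else 0) := by
      rw [Finset.sum_congr rfl fun ω _ =>
        (by rw [Finset.mul_sum] :
          (if Y ω ≠ ∅ then w ω * ((gib (V ω) (X ω) - 1) *
            (∑ y ∈ Finset.univ.filter (fun y : Finset (Fin K) => y ≠ ∅),
              (-1 : ℝ) ^ (1 + y.card) *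
                (qfull w Y V X y (V ω) (X ω) / qb y (V ω) (X ω)))) else 0) = _)]
      exact swap_sum' w Y _ _
    rw [hA, hC, hD2, ← Finset.sum_add_distrib]
    refine Finset.sum_congr rfl fun y hy' => ?_
    have hy : y ≠ ∅ := by simpa using (Finset.mem_filter.mp hy').2
    set e : ℝ := (-1 : ℝ) ^ (1 + y.card) with he
    set FA : 𝒱 → 𝒳 → ℝ := fun v x =>
      e * ((1 / pib y v) * ((1 / qb y v x) * (gib v x - 1) - (1 / qVb y v) * mb v)) with hFA
    set GB : 𝒱 → ℝ := fun v => e * ((1 / qVb y v) * mb v) with hGB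
    have hsplit : ∑ ω, (if Y ω ≠ ∅ then w ω *
          (e * (((if R ω = true then (1 : ℝ) else 0) * (if Y ω = y then (1 : ℝ) else 0))
              / pib y (V ω) *
            ((1 / qb y (V ω) (X ω)) * (gib (V ω) (X ω) - 1)
              - (1 / qVb y (V ω)) * mb (V ω))
          + (if Y ω = y then (1 : ℝ) else 0) / qVb y (V ω) * mb (V ω))) else 0)
        = (∑ ω, (if Y ω = y ∧ R ω = true then w ω * FA (V ω) (X ω) else 0))
          + (∑ ω, (if Y ω = y then w ω * GB (V ω) else 0)) := by
      rw [← Finset.sum_add_distrib]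
      refine Finset.sum_congr rfl fun ω _ => ?_
      by_cases hY : Y ω = y
      · have hne : Y ω ≠ ∅ := by rw [hY]; exact hy
        by_cases hR : R ω = true <;> simp [hY, hne, hy, hR, hFA, hGB] <;> ring
      · have h0 : ¬ (∅ : Finset (Fin K)) = y := fun h => hy h.symm
        by_cases hne : Y ω = ∅ <;> simp [hY, hne, hy, h0]
    rw [hsplit, mar_transfer w Y V X R hw0 hMAR hy FA,
      q_transfer w Y V X hw0 hy (fun v x => piR w Y V R y v * FA v x),
      qV_transfer w Y V hw0 hy GB]
    -- the doubly-robust remainder cancellation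
    set G1 : 𝒱 → ℝ := fun v =>
      e * ((1 - piR w Y V R y v / pib y v) * (qV w Y V y v / qVb y v)) with hG1
    set G2 : 𝒱 → ℝ := fun v =>
      e * (piR w Y V R y v * mb v / (pib y v * qVb y v)) with hG2
    set G3 : 𝒱 → ℝ := fun v => -(e * (qV w Y V y v * mb v / qVb y v)) with hG3
    have tower2 : ∑ ω, (if Y ω ≠ ∅ then w ω * (qfull w Y V X y (V ω) (X ω) * G2 (V ω)) else 0)
        = ∑ ω, (if Y ω ≠ ∅ then w ω * (qV w Y V y (V ω) * G2 (V ω)) else 0) :=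
      (q_transfer w Y V X hw0 hy (fun v _ => G2 v)).symm.trans
        (qV_transfer w Y V hw0 hy G2)
    have cancel : ∑ ω, (if Y ω ≠ ∅ then w ω *
          ((gib (V ω) (X ω) - 1) * G1 (V ω)
            + qfull w Y V X y (V ω) (X ω) * G2 (V ω) + G3 (V ω)) else 0) = 0 := by
      have split3 : ∑ ω, (if Y ω ≠ ∅ then w ω *
            ((gib (V ω) (X ω) - 1) * G1 (V ω)
              + qfull w Y V X y (V ω) (X ω) * G2 (V ω) + G3 (V ω)) else 0)
          = (∑ ω, (if Y ω ≠ ∅ then w ω * ((gib (V ω) (X ω) - 1) * G1 (V ω)) else 0))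
            + (∑ ω, (if Y ω ≠ ∅ then w ω * (qfull w Y V X y (V ω) (X ω) * G2 (V ω)) else 0))
            + (∑ ω, (if Y ω ≠ ∅ then w ω * G3 (V ω) else 0)) := by
        rw [← Finset.sum_add_distrib, ← Finset.sum_add_distrib]
        refine Finset.sum_congr rfl fun ω _ => ?_
        by_cases h : Y ω ≠ ∅ <;> simp [h] <;> ring
      rw [split3, mb_tower w Y V X hw0 gib mb hmb G1, tower2,
        ← Finset.sum_add_distrib, ← Finset.sum_add_distrib]
      refine Finset.sum_eq_zero fun ω _ => ?_
      by_cases h : Y ω ≠ ∅ <;> simp [h, hG1, hG2, hG3] <;> ring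
    -- combine: per-ω field identity
    have combine : ∑ ω, (if Y ω ≠ ∅ then w ω * ((gib (V ω) (X ω) - 1) *
            (e * ((piR w Y V R y (V ω) - pib y (V ω)) / pib y (V ω)) *
              ((qfull w Y V X y (V ω) (X ω) - qb y (V ω) (X ω)) / qb y (V ω) (X ω)
                - (qV w Y V y (V ω) - qVb y (V ω)) / qVb y (V ω)))) else 0)
          + ∑ ω, (if Y ω ≠ ∅ then w ω * ((gib (V ω) (X ω) - 1) *
              (e * (qfull w Y V X y (V ω) (X ω) / qb y (V ω) (X ω)))) else 0)
        = (∑ ω, (if Y ω ≠ ∅ then w ω *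
              (qfull w Y V X y (V ω) (X ω) * (piR w Y V R y (V ω) * FA (V ω) (X ω))) else 0)
            + ∑ ω, (if Y ω ≠ ∅ then w ω * (qV w Y V y (V ω) * GB (V ω)) else 0))
          + ∑ ω, (if Y ω ≠ ∅ then w ω *
              ((gib (V ω) (X ω) - 1) * G1 (V ω)
                + qfull w Y V X y (V ω) (X ω) * G2 (V ω) + G3 (V ω)) else 0) := by
      rw [← Finset.sum_add_distrib, ← Finset.sum_add_distrib, ← Finset.sum_add_distrib]
      refine Finset.sum_congr rfl fun ω _ => ?_
      by_cases h : Y ω ≠ ∅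
      · simp only [if_pos h]
        by_cases hw : w ω = 0
        · simp [hw]
        · have hpr : 0 < pr w (fun ω' => V ω' = V ω ∧ X ω' = X ω ∧ Y ω' ≠ ∅) :=
            pr_pos_of hw0 ⟨rfl, rfl, h⟩ hw
          obtain ⟨h1, h2, h3⟩ := hbpos y hy (V ω) (X ω) hpr
          simp only [hFA, hGB, hG1, hG2, hG3]
          field_simp
          ring
      · simp [h]
    rw [combine, cancel, add_zero]
  rw [main]; ring

/-- **Exact von Mises remainder identity.** In the capture-recapture setup,
assume MAR and positivity. Let `q̄_y(v,x) > 0`, `q̄_y(v) > 0`, `π̄(y,v) > 0` be arbitrary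
candidate nuisance functions on the support, set
`1/γ̄(v,x) = 1 + Π_{y ≠ 0} q̄_y(v,x)^{(−1)^{|y|+1}}` (denoted `gib`),
`1/γ(v,x) = 1 + Π_{y ≠ 0} q_y(v,x)^{(−1)^{|y|+1}}` (denoted `gi`), and
`m̄(v) = E_Q[ 1/γ̄(V,X) − 1 | V=v ]`.  With `φ̃` the uncentered one-step functional,
`E_Q[φ̃] − E_Q[1/γ(V,X) − 1]` equals the doubly robust remainder expression. -/
theorem von_mises_remainder_identity
    {Ω 𝒱 𝒳 : Type*} [Fintype Ω] {K : ℕ} (hK : 1 ≤ K)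
    (w : Ω → ℝ) (Y : Ω → Finset (Fin K)) (V : Ω → 𝒱) (X : Ω → 𝒳) (R : Ω → Bool)
    (hw0 : ∀ ω, 0 ≤ w ω) (hw1 : ∑ ω, w ω = 1)
    (hψ : 0 < pr w (fun ω => Y ω ≠ ∅))
    -- MAR: X and R are conditionally independent given (V, Y) under Q
    (hMAR : ∀ (y : Finset (Fin K)) (v : 𝒱) (x : 𝒳) (r : Bool),
      0 < pr w (fun ω => Y ω = y ∧ V ω = v ∧ Y ω ≠ ∅) →
      cpr w (fun ω => X ω = x ∧ R ω = r) (fun ω => Y ω = y ∧ V ω = v ∧ Y ω ≠ ∅)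
        = cpr w (fun ω => X ω = x) (fun ω => Y ω = y ∧ V ω = v ∧ Y ω ≠ ∅)
          * cpr w (fun ω => R ω = r) (fun ω => Y ω = y ∧ V ω = v ∧ Y ω ≠ ∅))
    -- positivity of the true nuisance functions on the support
    (hpos : ∀ y : Finset (Fin K), y ≠ ∅ → ∀ (v : 𝒱) (x : 𝒳),
      0 < pr w (fun ω => V ω = v ∧ X ω = x ∧ Y ω ≠ ∅) →
      0 < qfull w Y V X y v x ∧ 0 < qV w Y V y v ∧ 0 < piR w Y V R y v)
    -- candidate nuisance functions, positive on the support
    (qb : Finset (Fin K) → 𝒱 → 𝒳 → ℝ) (qVb : Finset (Fin K) → 𝒱 → ℝ)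
    (pib : Finset (Fin K) → 𝒱 → ℝ)
    (hbpos : ∀ y : Finset (Fin K), y ≠ ∅ → ∀ (v : 𝒱) (x : 𝒳),
      0 < pr w (fun ω => V ω = v ∧ X ω = x ∧ Y ω ≠ ∅) →
      0 < qb y v x ∧ 0 < qVb y v ∧ 0 < pib y v)
    -- gib v x = 1/γ̄(v,x) and gi v x = 1/γ(v,x)
    (gib gi : 𝒱 → 𝒳 → ℝ)
    (hgib : ∀ (v : 𝒱) (x : 𝒳), gib v x
      = 1 + ∏ y ∈ Finset.univ.filter (fun y : Finset (Fin K) => y ≠ ∅),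
          qb y v x ^ ((-1 : ℤ) ^ (y.card + 1)))
    (hgi : ∀ (v : 𝒱) (x : 𝒳), gi v x
      = 1 + ∏ y ∈ Finset.univ.filter (fun y : Finset (Fin K) => y ≠ ∅),
          qfull w Y V X y v x ^ ((-1 : ℤ) ^ (y.card + 1)))
    -- m̄(v) = E_Q[1/γ̄(V,X) − 1 | V = v]
    (mb : 𝒱 → ℝ)
    (hmb : ∀ v : 𝒱, mb v
      = cexp w (fun ω => gib (V ω) (X ω) - 1) (fun ω => V ω = v ∧ Y ω ≠ ∅))
    -- the uncentered one-step functional φ̃(z) for z = (y,v,x,r) with y ≠ 0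
    (φt : Finset (Fin K) → 𝒱 → 𝒳 → Bool → ℝ)
    (hφt : ∀ (y : Finset (Fin K)) (v : 𝒱) (x : 𝒳) (r : Bool), φt y v x r
      = ∑ y' ∈ Finset.univ.filter (fun y' : Finset (Fin K) => y' ≠ ∅),
          (-1 : ℝ) ^ (1 + y'.card) *
            (((if r = true then (1 : ℝ) else 0) * (if y = y' then (1 : ℝ) else 0))
                / pib y' v *
              ((1 / qb y' v x) * (gib v x - 1) - (1 / qVb y' v) * mb v)
            + (if y = y' then (1 : ℝ) else 0) / qVb y' v * mb v)) :
    cexp w (fun ω => φt (Y ω) (V ω) (X ω) (R ω)) (fun ω => Y ω ≠ ∅)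
      - cexp w (fun ω => gi (V ω) (X ω) - 1) (fun ω => Y ω ≠ ∅)
    = cexp w (fun ω => (gib (V ω) (X ω) - 1) *
          ∑ y ∈ Finset.univ.filter (fun y : Finset (Fin K) => y ≠ ∅),
            (-1 : ℝ) ^ (1 + y.card) *
              ((piR w Y V R y (V ω) - pib y (V ω)) / pib y (V ω)) *
              ((qfull w Y V X y (V ω) (X ω) - qb y (V ω) (X ω)) / qb y (V ω) (X ω)
                - (qV w Y V y (V ω) - qVb y (V ω)) / qVb y (V ω)))
        (fun ω => Y ω ≠ ∅)
      + cexp w (fun ω => (gib (V ω) (X ω) - 1) *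
            (∑ y ∈ Finset.univ.filter (fun y : Finset (Fin K) => y ≠ ∅),
              (-1 : ℝ) ^ (1 + y.card) *
                (qfull w Y V X y (V ω) (X ω) / qb y (V ω) (X ω)))
          - (gi (V ω) (X ω) - 1))
        (fun ω => Y ω ≠ ∅) := by
  have core := main_core w Y V X R hw0 hMAR qb qVb pib hbpos gib gi mb hmb φt hφt
  unfold cexp
  beta_reduce
  rw [← add_div, div_sub_div_same]
  congr 1
  refine Eq.trans ?_ (core.trans ?_) <;> congr 1 <;>
    exact Finset.sum_congr rfl fun ω _ => by by_cases h : Y ω ≠ ∅ <;> simp [h]
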